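/- Let G be a finite group, W a finite-dimensional complex vector space carrying a representation of G, and h a G-invariant Hermitian inner product on W (positive definite, ℂ-linear in the first variable and conjugate-linear in the second). If W admits a G-invariant quaternionic structure, then there exists a G-invariant quaternionic structure Q on W such that h(Qx, Qy) = h(y, x) for all x, y ∈ W. -/

import Mathlib

/-- A quaternionic structure on a complex vector space: a conjugate-linear map squaring to `−id`. -/
def IsQuaternionicStructure {W : Type*} [AddCommGroup W] [Module ℂ W] (Q : W → W) : Prop :=
  (∀ x y : W, Q (x + y) = Q x + Q y) ∧
  (∀ (a : ℂ) (x : W), Q (a • x) = (starRingEnd ℂ a) • Q x) ∧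
  (∀ x : W, Q (Q x) = -x)

set_option maxHeartbeats 1000000 in
/-- Let `W` be a finite-dimensional complex representation of a finite group
`G` and `h` a `G`-invariant Hermitian inner product on `W` (ℂ-linear in the first variable,
conjugate-linear in the second, positive definite).  If `W` admits a `G`-invariant quaternionic
structure then it admits one, `Q`, satisfying moreover `h(Qx, Qy) = h(y, x)` for all `x, y`. -/
theorem exists_invariant_quaternionic_structure_compatible_with_hermitian
    {G : Type*} [Group G] [Finite G]
    {W : Type*} [AddCommGroup W] [Module ℂ W] [FiniteDimensional ℂ W]
    (ρ : Representation ℂ G W)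
    (h : W → W → ℂ)
    (hadd₁ : ∀ x y z : W, h (x + y) z = h x z + h y z)
    (hsmul₁ : ∀ (a : ℂ) (x y : W), h (a • x) y = a * h x y)
    (hadd₂ : ∀ x y z : W, h x (y + z) = h x y + h x z)
    (hsmul₂ : ∀ (a : ℂ) (x y : W), h x (a • y) = (starRingEnd ℂ a) * h x y)
    (hherm : ∀ x y : W, h y x = starRingEnd ℂ (h x y))
    (hposdef : ∀ x : W, x ≠ 0 → 0 < (h x x).re)
    (hinv : ∀ (s : G) (x y : W), h (ρ s x) (ρ s y) = h x y)
    (hquat : ∃ Q₀ : W → W, IsQuaternionicStructure Q₀ ∧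
      ∀ (s : G) (x : W), Q₀ (ρ s x) = ρ s (Q₀ x)) :
    ∃ Q : W → W, IsQuaternionicStructure Q ∧ (∀ (s : G) (x : W), Q (ρ s x) = ρ s (Q x)) ∧
      ∀ x y : W, h (Q x) (Q y) = h y x := by
  obtain ⟨Q₀, ⟨hQadd, hQsmul, hQQ⟩, hQcomm⟩ := hquat
  have hzero₂ : ∀ y : W, h y 0 = 0 := by
    intro y; have := hadd₂ y 0 0; simpa using this.symm
  have hzero₁ : ∀ y : W, h 0 y = 0 := by
    intro y; have := hadd₁ 0 0 y; simpa using this.symm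
  -- nondegeneracy
  have hneg₂ : ∀ y v : W, h y (-v) = -h y v := by
    intro y v
    have := hadd₂ y v (-v)
    simp only [add_neg_cancel, hzero₂] at this
    linear_combination -this
  have hnondeg : ∀ u v : W, (∀ y, h y u = h y v) → u = v := by
    intro u v huv
    have hsub : ∀ y, h y (u - v) = 0 := by
      intro y
      rw [sub_eq_add_neg, hadd₂, hneg₂, huv]
      ring
    by_contra hne
    have h1 : u - v ≠ 0 := sub_ne_zero.mpr hne
    have := hposdef (u - v) h1
    rw [hsub (u - v)] at this
    simp at this
  -- the inner product space structure
  let core : InnerProductSpace.Core ℂ W :=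
    { inner := fun x y => h y x
      conj_inner_symm := by
        intro x y
        show (starRingEnd ℂ) (h x y) = h y x
        exact (hherm x y).symm
      re_inner_nonneg := by
        intro x
        rcases eq_or_ne x 0 with rfl | hx
        · simp [hzero₂]
        · exact (hposdef x hx).le
      add_left := by intro x y z; exact hadd₂ z x y
      smul_left := by intro x y r; exact hsmul₂ r y x
      definite := by
        intro x hx
        by_contra hx0
        exact (hposdef x hx0).ne' (by rw [show h x x = 0 from hx]; simp)}
  letI : NormedAddCommGroup W := core.toNormedAddCommGroup
  letI : InnerProductSpace ℂ W := InnerProductSpace.ofCore core.toCore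
  haveI : CompleteSpace W := FiniteDimensional.complete ℂ W
  have hInner : ∀ x y : W, (inner ℂ x y : ℂ) = h y x := fun _ _ => rfl
  -- the positive operator A
  let ψ : W → W →ₗ[ℂ] ℂ := fun y =>
    { toFun := fun x => h (Q₀ y) (Q₀ x)
      map_add' := by
        intro x z
        show h (Q₀ y) (Q₀ (x + z)) = h (Q₀ y) (Q₀ x) + h (Q₀ y) (Q₀ z)
        rw [hQadd, hadd₂]
      map_smul' := by
        intro a x
        show h (Q₀ y) (Q₀ (a • x)) = a * h (Q₀ y) (Q₀ x)
        rw [hQsmul, hsmul₂]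
        simp }
  let A₀ : W → W := fun y =>
    (InnerProductSpace.toDual ℂ W).symm (LinearMap.toContinuousLinearMap (ψ y))
  have hAdef : ∀ y x : W, h x (A₀ y) = h (Q₀ y) (Q₀ x) := by
    intro y x
    have := InnerProductSpace.toDual_symm_apply (𝕜 := ℂ) (E := W)
      (x := x) (y := LinearMap.toContinuousLinearMap (ψ y))
    calc h x (A₀ y) = (inner ℂ (A₀ y) x : ℂ) := rfl
      _ = LinearMap.toContinuousLinearMap (ψ y) x := this
      _ = h (Q₀ y) (Q₀ x) := rfl
  have hAdef' : ∀ y x : W, h (A₀ y) x = h (Q₀ x) (Q₀ y) := by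
    intro y x
    rw [hherm, hAdef, ← hherm]
  let A : W →ₗ[ℂ] W :=
    { toFun := A₀
      map_add' := by
        intro y z
        refine hnondeg _ _ fun x => ?_
        rw [hAdef, hadd₂, hQadd, hadd₁, hAdef, hAdef]
      map_smul' := by
        intro a y
        refine hnondeg _ _ fun x => ?_
        rw [hAdef, hQsmul, hsmul₁, hsmul₂, hAdef]
        simp }
  have hA_sym : A.IsSymmetric := by
    intro x y
    show h y (A₀ x) = h (A₀ y) x
    rw [hAdef, hAdef']

  -- eigenbasis of A
  have hn : Module.finrank ℂ W = Module.finrank ℂ W := rfl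
  let b := hA_sym.eigenvectorBasis hn
  let μ := hA_sym.eigenvalues hn
  have heig : ∀ i, A (b i) = (μ i : ℂ) • b i := fun i => hA_sym.apply_eigenvectorBasis hn i
  have hQzero : Q₀ 0 = 0 := by
    have := hQsmul 0 0
    simpa using this
  have hQinj0 : ∀ v : W, Q₀ v = 0 → v = 0 := by
    intro v hv
    have := hQQ v
    rw [hv, hQzero] at this
    simpa using this.symm
  have hμpos : ∀ i, 0 < μ i := by
    intro i
    have hb1 : (inner ℂ (b i) (b i) : ℂ) = 1 := by
      have := orthonormal_iff_ite.mp b.orthonormal i i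
      simpa using this
    have hbne : b i ≠ 0 := by
      intro hz
      rw [hz] at hb1
      simp at hb1
    have hQbne : Q₀ (b i) ≠ 0 := fun hz => hbne (hQinj0 _ hz)
    have hc : (μ i : ℂ) = h (Q₀ (b i)) (Q₀ (b i)) := by
      have h1 : h (b i) (A₀ (b i)) = h (Q₀ (b i)) (Q₀ (b i)) := hAdef (b i) (b i)
      have h2 : A₀ (b i) = (μ i : ℂ) • b i := heig i
      rw [h2, hsmul₂, Complex.conj_ofReal] at h1
      rw [← h1, show h (b i) (b i) = (inner ℂ (b i) (b i) : ℂ) from rfl, hb1, mul_one]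
    have := hposdef _ hQbne
    rw [← hc] at this
    simpa using this
  -- inverse square root of A
  let c : Fin (Module.finrank ℂ W) → ℝ := fun i => (Real.sqrt (μ i))⁻¹
  let f : W →ₗ[ℂ] W := b.toBasis.constr ℂ (fun i => ((c i : ℝ) : ℂ) • b i)
  have hfb : ∀ i, f (b i) = ((c i : ℝ) : ℂ) • b i := by
    intro i
    have := b.toBasis.constr_basis ℂ (fun i => ((c i : ℝ) : ℂ) • b i) i
    rwa [b.coe_toBasis] at this
  have keyf : ∀ (v : W) (t : ℝ), A₀ v = (t : ℂ) • v →
      f v = (((Real.sqrt t)⁻¹ : ℝ) : ℂ) • v := by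
    intro v t hv
    have hcj : ∀ j, (μ j : ℂ) * (inner ℂ (b j) v : ℂ) = (t : ℂ) * inner ℂ (b j) v := by
      intro j
      have h1 : (inner ℂ (A (b j)) v : ℂ) = inner ℂ (b j) (A v) := hA_sym (b j) v
      rw [heig j, show A v = A₀ v from rfl, hv, inner_smul_left, inner_smul_right,
        Complex.conj_ofReal] at h1
      exact h1
    have hrepr := b.sum_repr' v
    calc f v = f (∑ j, (inner ℂ (b j) v : ℂ) • b j) := by rw [hrepr]
      _ = ∑ j, (inner ℂ (b j) v : ℂ) • (((c j : ℝ) : ℂ) • b j) := by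
          rw [map_sum]
          exact Finset.sum_congr rfl fun j _ => by rw [map_smul, hfb]
      _ = ∑ j, (inner ℂ (b j) v : ℂ) • ((((Real.sqrt t)⁻¹ : ℝ) : ℂ) • b j) := by
          refine Finset.sum_congr rfl fun j _ => ?_
          rcases eq_or_ne (inner ℂ (b j) v : ℂ) 0 with hz | hz
          · rw [hz, zero_smul, zero_smul]
          · have h4 := hcj j
            have h5 : ((μ j : ℂ) - (t : ℂ)) * (inner ℂ (b j) v : ℂ) = 0 := by
              linear_combination h4
            have h6 : (μ j : ℂ) = (t : ℂ) := by
              rcases mul_eq_zero.mp h5 with h6 | h6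
              · exact sub_eq_zero.mp h6
              · exact absurd h6 hz
            have h3 : μ j = t := by exact_mod_cast h6
            have h7 : c j = (Real.sqrt t)⁻¹ := by
              show (Real.sqrt (μ j))⁻¹ = (Real.sqrt t)⁻¹
              rw [h3]
            rw [h7]
      _ = ∑ j, (((Real.sqrt t)⁻¹ : ℝ) : ℂ) • ((inner ℂ (b j) v : ℂ) • b j) :=
          Finset.sum_congr rfl fun j _ => smul_comm _ _ _
      _ = (((Real.sqrt t)⁻¹ : ℝ) : ℂ) • ∑ j, (inner ℂ (b j) v : ℂ) • b j :=
          (Finset.smul_sum).symm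
      _ = (((Real.sqrt t)⁻¹ : ℝ) : ℂ) • v := by rw [hrepr]

  -- the key identity  A Q₀ A = Q₀
  have hneg₁ : ∀ v y : W, h (-v) y = -h v y := by
    intro v y
    have := hsmul₁ (-1) v y
    simpa using this
  have hAQA : ∀ x : W, A₀ (Q₀ (A₀ x)) = Q₀ x := by
    intro x
    refine hnondeg _ _ fun y => ?_
    rw [hAdef, hQQ, hneg₁]
    have h1 : h (A₀ x) (Q₀ y) = h (Q₀ (Q₀ y)) (Q₀ x) := hAdef' x (Q₀ y)
    rw [h1, hQQ, hneg₁, neg_neg]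
  -- transport of eigenvectors by Q₀
  have htrans : ∀ (v : W) (t : ℝ), 0 < t → A₀ v = (t : ℂ) • v →
      A₀ (Q₀ v) = ((t⁻¹ : ℝ) : ℂ) • Q₀ v := by
    intro v t ht hv
    have h1 : A₀ (Q₀ (A₀ v)) = Q₀ v := hAQA v
    rw [hv, hQsmul, Complex.conj_ofReal] at h1
    have h2 : A₀ ((t : ℂ) • Q₀ v) = (t : ℂ) • A₀ (Q₀ v) := A.map_smul _ _
    rw [h2] at h1
    have ht0 : (t : ℂ) ≠ 0 := by
      simpa using ht.ne'
    rw [Complex.ofReal_inv]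
    rw [eq_comm, inv_smul_eq_iff₀ ht0]
    exact h1.symm
  have hfQb : ∀ i, f (Q₀ (b i)) = ((Real.sqrt (μ i) : ℝ) : ℂ) • Q₀ (b i) := by
    intro i
    have h1 : A₀ (Q₀ (b i)) = (((μ i)⁻¹ : ℝ) : ℂ) • Q₀ (b i) :=
      htrans (b i) (μ i) (hμpos i) (heig i)
    have h2 := keyf (Q₀ (b i)) ((μ i)⁻¹) h1
    rwa [Real.sqrt_inv, inv_inv] at h2
  have hQfb : ∀ i, Q₀ (f (b i)) = ((c i : ℝ) : ℂ) • Q₀ (b i) := by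
    intro i
    rw [hfb, hQsmul, Complex.conj_ofReal]
  have hsqrt_ne : ∀ i, Real.sqrt (μ i) ≠ 0 := fun i =>
    (Real.sqrt_pos.mpr (hμpos i)).ne'
  have hcsqrt : ∀ i, ((c i : ℝ) : ℂ) * ((Real.sqrt (μ i) : ℝ) : ℂ) = 1 := by
    intro i
    rw [← Complex.ofReal_mul]
    norm_cast
    exact inv_mul_cancel₀ (hsqrt_ne i)
  -- the candidate structure
  set Qf : W → W := fun x => Q₀ (f x) with hQf
  have hQfadd : ∀ x y : W, Qf (x + y) = Qf x + Qf y := by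
    intro x y
    show Q₀ (f (x + y)) = Q₀ (f x) + Q₀ (f y)
    rw [f.map_add, hQadd]
  have hQfsmul : ∀ (a : ℂ) (x : W), Qf (a • x) = (starRingEnd ℂ a) • Qf x := by
    intro a x
    show Q₀ (f (a • x)) = (starRingEnd ℂ a) • Q₀ (f x)
    rw [f.map_smul, hQsmul]
  -- Qf ∘ Qf = -id
  let D : W →ₗ[ℂ] W :=
    { toFun := fun x => Q₀ (f (Q₀ (f x)))
      map_add' := by
        intro x y
        show Q₀ (f (Q₀ (f (x + y)))) = _
        rw [f.map_add, hQadd, f.map_add, hQadd]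
      map_smul' := by
        intro a x
        show Q₀ (f (Q₀ (f (a • x)))) = a • Q₀ (f (Q₀ (f x)))
        rw [f.map_smul, hQsmul, f.map_smul, hQsmul]
        simp }
  have hDb : ∀ i, D (b i) = -(b i) := by
    intro i
    show Q₀ (f (Q₀ (f (b i)))) = -(b i)
    rw [hfb, hQsmul, Complex.conj_ofReal, f.map_smul, hfQb, hQsmul, Complex.conj_ofReal,
      hQsmul, Complex.conj_ofReal, hQQ, smul_smul, hcsqrt, one_smul]
  have hDeq : D = -LinearMap.id := by
    refine b.toBasis.ext fun i => ?_
    rw [b.coe_toBasis, hDb]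
    simp
  have hQfQf : ∀ x : W, Qf (Qf x) = -x := by
    intro x
    have := LinearMap.congr_fun hDeq x
    exact (by simpa using this : D x = -x)
  -- compatibility with h, on basis vectors
  have hbasis_comp : ∀ i j, h (Qf (b i)) (Qf (b j)) = h (b j) (b i) := by
    intro i j
    have hb_ij : h (b j) (b i) = (inner ℂ (b i) (b j) : ℂ) := rfl
    have horth := orthonormal_iff_ite.mp b.orthonormal i j
    have hQ0b : h (Q₀ (b i)) (Q₀ (b j)) = (μ i : ℂ) * (inner ℂ (b i) (b j) : ℂ) := by
      have h1 : h (b j) (A₀ (b i)) = h (Q₀ (b i)) (Q₀ (b j)) := hAdef (b i) (b j)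
      rw [show A₀ (b i) = ((μ i : ℝ) : ℂ) • b i from heig i] at h1
      rw [← h1, hsmul₂, Complex.conj_ofReal, hb_ij]
    show h (Q₀ (f (b i))) (Q₀ (f (b j))) = h (b j) (b i)
    rw [hQfb, hQfb, hsmul₁, hsmul₂, Complex.conj_ofReal, hQ0b, hb_ij, horth]
    rcases eq_or_ne i j with rfl | hij
    · have hsq : Real.sqrt (μ i) * Real.sqrt (μ i) = μ i :=
        Real.mul_self_sqrt (hμpos i).le
      have hr : c i * c i * μ i = 1 := by
        have h9 : c i = (Real.sqrt (μ i))⁻¹ := rfl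
        rw [h9, ← hsq]
        field_simp
        rw [Real.sqrt_sq (Real.sqrt_nonneg _), div_self (pow_ne_zero 2 (hsqrt_ne i))]
      have hrc : ((c i : ℝ) : ℂ) * ((c i : ℝ) : ℂ) * ((μ i : ℝ) : ℂ) = 1 := by
        exact_mod_cast hr
      rw [if_pos rfl]
      linear_combination hrc
    · rw [if_neg hij]
      ring
  -- extend compatibility to all vectors, first in the first variable
  have hcomp₁ : ∀ j (x : W), h (Qf x) (Qf (b j)) = h (b j) x := by
    intro j
    have hLeq :
        (({ toFun := fun x => (starRingEnd ℂ) (h (Qf x) (Qf (b j)))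
            map_add' := by
              intro x y
              show (starRingEnd ℂ) (h (Qf (x + y)) (Qf (b j))) =
                (starRingEnd ℂ) (h (Qf x) (Qf (b j))) + (starRingEnd ℂ) (h (Qf y) (Qf (b j)))
              rw [hQfadd, hadd₁, map_add]
            map_smul' := by
              intro a x
              show (starRingEnd ℂ) (h (Qf (a • x)) (Qf (b j))) =
                a * (starRingEnd ℂ) (h (Qf x) (Qf (b j)))
              rw [hQfsmul, hsmul₁, map_mul]
              simp } : W →ₗ[ℂ] ℂ) :  W →ₗ[ℂ] ℂ) =
        { toFun := fun x => (starRingEnd ℂ) (h (b j) x)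
          map_add' := by
            intro x y
            show (starRingEnd ℂ) (h (b j) (x + y)) =
              (starRingEnd ℂ) (h (b j) x) + (starRingEnd ℂ) (h (b j) y)
            rw [hadd₂, map_add]
          map_smul' := by
            intro a x
            show (starRingEnd ℂ) (h (b j) (a • x)) = a * (starRingEnd ℂ) (h (b j) x)
            rw [hsmul₂, map_mul]
            simp } := by
      refine b.toBasis.ext fun i => ?_
      rw [b.coe_toBasis]
      show (starRingEnd ℂ) (h (Qf (b i)) (Qf (b j))) = (starRingEnd ℂ) (h (b j) (b i))
      rw [hbasis_comp]
    intro x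
    have := LinearMap.congr_fun hLeq x
    exact (starRingEnd ℂ).injective this
  have hcomp : ∀ x y : W, h (Qf x) (Qf y) = h y x := by
    intro x
    have hMeq :
        (({ toFun := fun y => h (Qf x) (Qf y)
            map_add' := by
              intro y z
              show h (Qf x) (Qf (y + z)) = h (Qf x) (Qf y) + h (Qf x) (Qf z)
              rw [hQfadd, hadd₂]
            map_smul' := by
              intro a y
              show h (Qf x) (Qf (a • y)) = a * h (Qf x) (Qf y)
              rw [hQfsmul, hsmul₂]
              simp } : W →ₗ[ℂ] ℂ) : W →ₗ[ℂ] ℂ) =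
        { toFun := fun y => h y x
          map_add' := by
            intro y z
            show h (y + z) x = h y x + h z x
            rw [hadd₁]
          map_smul' := by
            intro a y
            show h (a • y) x = a * h y x
            rw [hsmul₁] } := by
      refine b.toBasis.ext fun j => ?_
      rw [b.coe_toBasis]
      exact hcomp₁ j x
    intro y
    exact LinearMap.congr_fun hMeq y
  -- G-equivariance
  have hrhoinv : ∀ (s : G) (z : W), ρ s⁻¹ (ρ s z) = z := by
    intro s z
    have : ρ s⁻¹ * ρ s = 1 := by
      rw [← map_mul, inv_mul_cancel, map_one]
    calc ρ s⁻¹ (ρ s z) = (ρ s⁻¹ * ρ s) z := rfl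
      _ = z := by rw [this]; rfl
  have hrhoinv' : ∀ (s : G) (z : W), ρ s (ρ s⁻¹ z) = z := by
    intro s z
    have := hrhoinv s⁻¹ z
    rwa [inv_inv] at this
  have hAcomm : ∀ (s : G) (x : W), A₀ (ρ s x) = ρ s (A₀ x) := by
    intro s x
    refine hnondeg _ _ fun y => ?_
    rw [hAdef, hQcomm]
    have h1 : h y (ρ s (A₀ x)) = h (ρ s⁻¹ y) (A₀ x) := by
      conv_lhs => rw [← hrhoinv' s y]
      rw [hinv]
    rw [h1, hAdef, hQcomm]
    have h2 : h (ρ s (Q₀ x)) (Q₀ y) = h (Q₀ x) (ρ s⁻¹ (Q₀ y)) := by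
      conv_rhs => rw [← hinv s]
      rw [hrhoinv']
    rw [h2]
  have hfcomm : ∀ (s : G) (x : W), f (ρ s x) = ρ s (f x) := by
    intro s x
    have : f ∘ₗ (ρ s) = (ρ s) ∘ₗ f := by
      refine b.toBasis.ext fun i => ?_
      rw [b.coe_toBasis]
      show f (ρ s (b i)) = ρ s (f (b i))
      have h1 : A₀ (ρ s (b i)) = ((μ i : ℝ) : ℂ) • ρ s (b i) := by
        rw [hAcomm, show A₀ (b i) = ((μ i : ℝ) : ℂ) • b i from heig i, map_smul]
      rw [keyf _ _ h1, hfb, map_smul]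
    exact LinearMap.congr_fun this x
  have hQfcomm : ∀ (s : G) (x : W), Qf (ρ s x) = ρ s (Qf x) := by
    intro s x
    show Q₀ (f (ρ s x)) = ρ s (Q₀ (f x))
    rw [hfcomm, hQcomm]
  exact ⟨Qf, ⟨hQfadd, hQfsmul, hQfQf⟩, hQfcomm, hcomp⟩
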